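/- Let φ : (0,∞) → [0,∞) be convex with φ(1) = 0 and strictly convex at 1, and let P, Q be probability measures with λ-densities f_P, f_Q. If P and Q are mutually singular (i.e. λ({f_P > 0} ∩ {f_Q > 0}) = 0), then D_φ(P,Q) = φ(0) + φ*(0). Conversely, if φ(0) + φ*(0) < ∞ and D_φ(P,Q) = φ(0) + φ*(0), then P and Q are mutually singular. -/

import Mathlib

open Set Filter MeasureTheory
open scoped ENNReal

/-- `φ` is strictly convex at the point `1`. -/
def StrictlyConvexAtOne (φ : ℝ → ℝ) : Prop :=
  ∀ ⦃x y a b : ℝ⦄, x ∈ Set.Ioi (0:ℝ) → y ∈ Set.Ioi (0:ℝ) → x ≠ y →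
    0 < a → 0 < b → a + b = 1 → a * x + b * y = 1 → φ 1 < a * φ x + b * φ y

/-- The Csiszár–Ali–Silvey–Morimoto φ-divergence
`D_φ(P,Q) := ∫_{{f_P·f_Q > 0}} φ(f_P/f_Q) dQ + φ(0)·Q[{f_P = 0}] + φ*(0)·P[{f_Q = 0}]`
of `P := λ.withDensity f_P` from `Q := λ.withDensity f_Q`; the boundary values
`φ0 = φ(0) := lim_{t↓0} φ(t)` and `φstar0 = φ*(0) := lim_{t→∞} φ(t)/t` are
elements of `[0,∞]`, and the conventions `φ(0)·0 := 0`, `φ*(0)·0 := 0` hold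
automatically in `ℝ≥0∞`. -/
noncomputable def phiDiv {𝒳 : Type*} [MeasurableSpace 𝒳]
    (φ : ℝ → ℝ) (φ0 φstar0 : ℝ≥0∞)
    (lam : Measure 𝒳) (fP fQ : 𝒳 → ℝ≥0∞) : ℝ≥0∞ :=
  (∫⁻ x in {x | 0 < fP x ∧ 0 < fQ x},
      ENNReal.ofReal (φ ((fP x / fQ x).toReal)) ∂(lam.withDensity fQ))
    + φ0 * (lam.withDensity fQ) {x | fP x = 0}
    + φstar0 * (lam.withDensity fP) {x | fQ x = 0}

section RealLemmas

variable {φ : ℝ → ℝ} {c0 c1 : ℝ}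

lemma slope_le_c1 (hconv : ConvexOn ℝ (Set.Ioi (0:ℝ)) φ)
    (h1 : Tendsto (fun t => φ t / t) atTop (nhds c1))
    {ε t : ℝ} (hε : 0 < ε) (hεt : ε < t) :
    (φ t - φ ε) / (t - ε) ≤ c1 := by
  have ht : 0 < t := hε.trans hεt
  have hsub : Tendsto (fun s : ℝ => s - ε) atTop atTop := by
    simpa [sub_eq_add_neg] using tendsto_atTop_add_const_right atTop (-ε) tendsto_id
  have hlim : Tendsto (fun s : ℝ => (φ s - φ ε) / (s - ε)) atTop (nhds c1) := by
    have hfrac : Tendsto (fun s : ℝ => s / (s - ε)) atTop (nhds 1) := by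
      have h' : Tendsto (fun s : ℝ => 1 + ε / (s - ε)) atTop (nhds (1 + 0)) :=
        tendsto_const_nhds.add (tendsto_const_nhds.div_atTop hsub)
      rw [add_zero] at h'
      refine h'.congr' ?_
      filter_upwards [eventually_gt_atTop ε] with s hs
      have hne : s - ε ≠ 0 := sub_ne_zero.mpr hs.ne'
      field_simp
      ring
    have h' : Tendsto (fun s : ℝ => φ s / s * (s / (s - ε)) - φ ε / (s - ε)) atTop
        (nhds (c1 * 1 - 0)) :=
      (h1.mul hfrac).sub (tendsto_const_nhds.div_atTop hsub)
    rw [mul_one, sub_zero] at h'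
    refine h'.congr' ?_
    filter_upwards [eventually_gt_atTop ε, eventually_gt_atTop 0] with s hs hs0
    have hne : s - ε ≠ 0 := sub_ne_zero.mpr hs.ne'
    field_simp
  refine ge_of_tendsto hlim ?_
  filter_upwards [eventually_ge_atTop t] with s hs
  exact hconv.secant_mono (mem_Ioi.2 hε) (mem_Ioi.2 ht) (mem_Ioi.2 (ht.trans_le hs))
    (ne_of_gt hεt) (ne_of_gt (hεt.trans_le hs)) hs

lemma tendsto_slope0 (h0 : Tendsto φ (nhdsWithin 0 (Set.Ioi (0:ℝ))) (nhds c0))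
    {u : ℝ} (hu : 0 < u) :
    Tendsto (fun ε : ℝ => (φ u - φ ε) / (u - ε)) (nhdsWithin 0 (Set.Ioi (0:ℝ)))
      (nhds ((φ u - c0) / u)) := by
  have hid : Tendsto (fun ε : ℝ => ε) (nhdsWithin 0 (Set.Ioi (0:ℝ))) (nhds 0) :=
    tendsto_id.mono_left nhdsWithin_le_nhds
  have hnum : Tendsto (fun ε : ℝ => φ u - φ ε) (nhdsWithin 0 (Set.Ioi (0:ℝ)))
      (nhds (φ u - c0)) := tendsto_const_nhds.sub h0
  have hden : Tendsto (fun ε : ℝ => u - ε) (nhdsWithin 0 (Set.Ioi (0:ℝ)))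
      (nhds (u - 0)) := tendsto_const_nhds.sub hid
  have := hnum.div hden (by simpa using hu.ne')
  simp only [sub_zero] at this
  exact this

lemma phi_le_line (hconv : ConvexOn ℝ (Set.Ioi (0:ℝ)) φ)
    (h0 : Tendsto φ (nhdsWithin 0 (Set.Ioi (0:ℝ))) (nhds c0))
    (h1 : Tendsto (fun t => φ t / t) atTop (nhds c1))
    {t : ℝ} (ht : 0 < t) : φ t ≤ c0 + t * c1 := by
  have h2 : ∀ᶠ ε in nhdsWithin 0 (Set.Ioi (0:ℝ)), (φ t - φ ε) / (t - ε) ≤ c1 := by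
    filter_upwards [self_mem_nhdsWithin, mem_nhdsWithin_of_mem_nhds (Iio_mem_nhds ht)]
      with ε hε hεt
    exact slope_le_c1 hconv h1 hε hεt
  have h3 : (φ t - c0) / t ≤ c1 := le_of_tendsto (tendsto_slope0 h0 ht) h2
  rw [div_le_iff₀ ht] at h3
  linarith

lemma phi_lt_line (hconv : ConvexOn ℝ (Set.Ioi (0:ℝ)) φ)
    (hnonneg : ∀ t ∈ Set.Ioi (0:ℝ), 0 ≤ φ t)
    (hone : φ 1 = 0) (hstrict : StrictlyConvexAtOne φ)
    (h0 : Tendsto φ (nhdsWithin 0 (Set.Ioi (0:ℝ))) (nhds c0))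
    (h1 : Tendsto (fun t => φ t / t) atTop (nhds c1))
    {t : ℝ} (ht : 0 < t) : φ t < c0 + t * c1 := by
  rcases lt_or_eq_of_le (phi_le_line hconv h0 h1 ht) with h | heq
  · exact h
  exfalso
  -- φ agrees with the line everywhere
  have hall : ∀ u : ℝ, 0 < u → φ u = c0 + u * c1 := by
    intro u hu
    rcases lt_trichotomy u t with hlt | rfl | hgt
    · refine le_antisymm (phi_le_line hconv h0 h1 hu) ?_
      have hs := slope_le_c1 hconv h1 hu hlt
      rw [div_le_iff₀ (by linarith : (0:ℝ) < t - u)] at hs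
      nlinarith [hs, heq]
    · exact heq
    · refine le_antisymm (phi_le_line hconv h0 h1 hu) ?_
      have hle : (φ t - c0) / t ≤ (φ u - φ t) / (u - t) := by
        refine le_of_tendsto (tendsto_slope0 h0 ht) ?_
        filter_upwards [self_mem_nhdsWithin,
          mem_nhdsWithin_of_mem_nhds (Iio_mem_nhds ht)] with ε hε hεt
        exact hconv.slope_mono_adjacent (mem_Ioi.2 hε) (mem_Ioi.2 (ht.trans hgt)) hεt hgt
      have hc : (φ t - c0) / t = c1 := by
        rw [heq]; field_simp; ring
      rw [hc, le_div_iff₀ (by linarith : (0:ℝ) < u - t)] at hle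
      nlinarith [hle, heq]
  have hc0 : 0 ≤ c0 := by
    refine ge_of_tendsto h0 ?_
    filter_upwards [self_mem_nhdsWithin] with ε hε using hnonneg ε hε
  have hc1 : 0 ≤ c1 := by
    refine ge_of_tendsto h1 ?_
    filter_upwards [eventually_gt_atTop 0] with s hs
    exact div_nonneg (hnonneg s hs) hs.le
  have h1' := hall 1 one_pos
  rw [hone] at h1'
  have hc0' : c0 = 0 := by linarith
  have hc1' : c1 = 0 := by linarith
  have hhalf : φ (1/2) = 0 := by
    have := hall (1/2) (by norm_num); rw [hc0', hc1'] at this; linarith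
  have hth : φ (3/2) = 0 := by
    have := hall (3/2) (by norm_num); rw [hc0', hc1'] at this; linarith
  have := hstrict (x := 1/2) (y := 3/2) (a := 1/2) (b := 1/2)
    (by norm_num) (by norm_num) (by norm_num) (by norm_num) (by norm_num)
    (by norm_num) (by norm_num)
  rw [hone, hhalf, hth] at this
  norm_num at this

end RealLemmas

section MeasLemmas

variable {𝒳 : Type*} [MeasurableSpace 𝒳] (lam : Measure 𝒳) {f g : 𝒳 → ℝ≥0∞}

lemma measset_pos (hf : Measurable f) : MeasurableSet {x | 0 < f x} :=
  measurableSet_lt measurable_const hf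

lemma measset_S (hf : Measurable f) (hg : Measurable g) :
    MeasurableSet {x | 0 < f x ∧ 0 < g x} := by
  rw [Set.setOf_and]
  exact (measset_pos hf).inter (measset_pos hg)

lemma zero_meas_eq (hf : Measurable f) (hg : Measurable g)
    [IsProbabilityMeasure (lam.withDensity g)] :
    (lam.withDensity g) {x | f x = 0}
      = 1 - (lam.withDensity g) {x | 0 < f x ∧ 0 < g x} := by
  have hfm := measset_pos hf
  have hTm : MeasurableSet ({x | 0 < f x} ∩ {x | g x = 0}) :=
    hfm.inter (hg (measurableSet_singleton 0))
  have hzero : (lam.withDensity g) ({x | 0 < f x} ∩ {x | g x = 0}) = 0 := by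
    rw [withDensity_apply _ hTm]
    have : ∫⁻ x in ({x | 0 < f x} ∩ {x | g x = 0}), g x ∂lam
        = ∫⁻ _ in ({x | 0 < f x} ∩ {x | g x = 0}), 0 ∂lam :=
      setLIntegral_congr_fun hTm (fun x hx => hx.2)
    rw [this, lintegral_zero]
  have hsplit : {x | 0 < f x}
      = {x | 0 < f x ∧ 0 < g x} ∪ ({x | 0 < f x} ∩ {x | g x = 0}) := by
    ext x
    simp only [mem_setOf_eq, mem_union, mem_inter_iff]
    constructor
    · intro h
      rcases eq_or_ne (g x) 0 with h0 | h0
      · exact Or.inr ⟨h, h0⟩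
      · exact Or.inl ⟨h, pos_iff_ne_zero.mpr h0⟩
    · rintro (⟨h, _⟩ | ⟨h, _⟩) <;> exact h
  have hdisj : Disjoint {x | 0 < f x ∧ 0 < g x} ({x | 0 < f x} ∩ {x | g x = 0}) := by
    rw [Set.disjoint_left]
    rintro x ⟨_, hx2⟩ ⟨_, hx4⟩
    exact hx2.ne' hx4
  have hpos : (lam.withDensity g) {x | 0 < f x}
      = (lam.withDensity g) {x | 0 < f x ∧ 0 < g x} := by
    rw [hsplit, measure_union hdisj hTm, hzero, add_zero]
  have hcompl : {x | f x = 0} = {x | 0 < f x}ᶜ := by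
    ext x; simp [pos_iff_ne_zero]
  rw [hcompl, measure_compl hfm (measure_ne_top _ _), measure_univ, hpos]

lemma lam_S_zero_of_withDensity_zero (hf : Measurable f) (hg : Measurable g)
    (h : (lam.withDensity g) {x | 0 < f x ∧ 0 < g x} = 0) :
    lam {x | 0 < f x ∧ 0 < g x} = 0 := by
  have hSm := measset_S hf hg
  rw [withDensity_apply _ hSm] at h
  rw [← Measure.restrict_eq_zero]
  have h1 : g =ᵐ[lam.restrict {x | 0 < f x ∧ 0 < g x}] 0 :=
    (lintegral_eq_zero_iff hg).mp h
  have h2 := ae_restrict_mem (μ := lam) hSm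
  have hfalse : ∀ᵐ x ∂(lam.restrict {x | 0 < f x ∧ 0 < g x}), False := by
    filter_upwards [h1, h2] with x hx1 hx2
    exact hx2.2.ne' hx1
  exact MeasureTheory.ae_eq_bot.mp (Filter.eventually_false_iff_eq_bot.mp hfalse)

end MeasLemmas

/-- maximal value and singularity: let `φ : (0,∞) → [0,∞)` be
convex with `φ(1) = 0` and strictly convex at `1`, and let
`P = λ.withDensity f_P`, `Q = λ.withDensity f_Q` be probability measures with
λ-densities `f_P`, `f_Q`. If `P ⊥ Q`, i.e. `λ({f_P > 0} ∩ {f_Q > 0}) = 0`, then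
`D_φ(P,Q) = φ(0) + φ*(0)`; conversely, if `φ(0) + φ*(0) < ∞` and
`D_φ(P,Q) = φ(0) + φ*(0)`, then `P ⊥ Q`. -/
theorem phiDiv_eq_bound_iff_singular {𝒳 : Type*} [MeasurableSpace 𝒳]
    (lam : Measure 𝒳) [SigmaFinite lam]
    (fP fQ : 𝒳 → ℝ≥0∞) (hfP : Measurable fP) (hfQ : Measurable fQ)
    [IsProbabilityMeasure (lam.withDensity fP)]
    [IsProbabilityMeasure (lam.withDensity fQ)]
    (φ : ℝ → ℝ) (hconv : ConvexOn ℝ (Set.Ioi (0:ℝ)) φ)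
    (hnonneg : ∀ t ∈ Set.Ioi (0:ℝ), 0 ≤ φ t)
    (hone : φ 1 = 0) (hstrict : StrictlyConvexAtOne φ)
    (φ0 φstar0 : ℝ≥0∞)
    (hφ0 : Tendsto (fun t : ℝ => ENNReal.ofReal (φ t))
      (nhdsWithin 0 (Set.Ioi (0:ℝ))) (nhds φ0))
    (hφstar0 : Tendsto (fun t : ℝ => ENNReal.ofReal (φ t / t)) atTop (nhds φstar0)) :
    (lam ({x | 0 < fP x} ∩ {x | 0 < fQ x}) = 0 →
      phiDiv φ φ0 φstar0 lam fP fQ = φ0 + φstar0)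
    ∧ (φ0 + φstar0 < ⊤ → phiDiv φ φ0 φstar0 lam fP fQ = φ0 + φstar0 →
      lam ({x | 0 < fP x} ∩ {x | 0 < fQ x}) = 0) := by
  have hSm : MeasurableSet {x | 0 < fP x ∧ 0 < fQ x} := measset_S hfP hfQ
  have hSeq : {x | 0 < fP x} ∩ {x | 0 < fQ x} = {x | 0 < fP x ∧ 0 < fQ x} :=
    (Set.setOf_and).symm
  have hcomm : {x | 0 < fQ x ∧ 0 < fP x} = {x | 0 < fP x ∧ 0 < fQ x} := by
    ext x; exact and_comm
  have h2 := zero_meas_eq lam hfP hfQ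
  have h3' := zero_meas_eq lam hfQ hfP
  rw [hcomm] at h3'
  constructor
  · -- forward direction
    intro hlam0
    rw [hSeq] at hlam0
    have hQS : (lam.withDensity fQ) {x | 0 < fP x ∧ 0 < fQ x} = 0 :=
      withDensity_absolutelyContinuous lam fQ hlam0
    have hPS : (lam.withDensity fP) {x | 0 < fP x ∧ 0 < fQ x} = 0 :=
      withDensity_absolutelyContinuous lam fP hlam0
    have hI : ∫⁻ x in {x | 0 < fP x ∧ 0 < fQ x},
        ENNReal.ofReal (φ ((fP x / fQ x).toReal)) ∂(lam.withDensity fQ) = 0 :=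
      setLIntegral_measure_zero _ _ hQS
    rw [phiDiv, h2, h3', hQS, hPS, tsub_zero, mul_one, mul_one, hI, zero_add]
  · -- converse direction
    intro hfin heq
    have hφ0top : φ0 ≠ ⊤ := (le_self_add.trans_lt hfin).ne
    have hφstop : φstar0 ≠ ⊤ := (le_add_self.trans_lt hfin).ne
    -- real limits
    have hc0 : Tendsto φ (nhdsWithin 0 (Set.Ioi (0:ℝ))) (nhds φ0.toReal) := by
      refine Filter.Tendsto.congr' ?_ ((ENNReal.tendsto_toReal hφ0top).comp hφ0)
      filter_upwards [self_mem_nhdsWithin] with t ht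
      exact ENNReal.toReal_ofReal (hnonneg t ht)
    have hc1 : Tendsto (fun t => φ t / t) atTop (nhds φstar0.toReal) := by
      refine Filter.Tendsto.congr' ?_ ((ENNReal.tendsto_toReal hφstop).comp hφstar0)
      filter_upwards [eventually_gt_atTop 0] with t ht
      exact ENNReal.toReal_ofReal (div_nonneg (hnonneg t ht) ht.le)
    by_contra hlam
    rw [hSeq] at hlam
    have hQSne : (lam.withDensity fQ) {x | 0 < fP x ∧ 0 < fQ x} ≠ 0 :=
      fun h => hlam (lam_S_zero_of_withDensity_zero lam hfP hfQ h)
    -- densities are a.e. finite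
    have hPuniv : ∫⁻ x, fP x ∂lam = 1 := by
      have h := withDensity_apply (μ := lam) fP (MeasurableSet.univ (α := 𝒳))
      rw [Measure.restrict_univ] at h
      rw [← h, measure_univ]
    have hQuniv : ∫⁻ x, fQ x ∂lam = 1 := by
      have h := withDensity_apply (μ := lam) fQ (MeasurableSet.univ (α := 𝒳))
      rw [Measure.restrict_univ] at h
      rw [← h, measure_univ]
    have hfPfin : ∀ᵐ x ∂lam, fP x < ⊤ :=
      ae_lt_top hfP (by rw [hPuniv]; exact ENNReal.one_ne_top)
    have hfQfin : ∀ᵐ x ∂lam, fQ x < ⊤ :=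
      ae_lt_top hfQ (by rw [hQuniv]; exact ENNReal.one_ne_top)
    have habs : lam.withDensity fQ ≪ lam := withDensity_absolutelyContinuous lam fQ
    have haeQ : ∀ᵐ x ∂(lam.withDensity fQ), fP x < ⊤ ∧ fQ x < ⊤ :=
      (hfPfin.and hfQfin).filter_mono habs.ae_le
    -- pointwise strict bound
    have haept : ∀ᵐ x ∂(lam.withDensity fQ), x ∈ {x | 0 < fP x ∧ 0 < fQ x} →
        ENNReal.ofReal (φ ((fP x / fQ x).toReal)) < φ0 + (fP x / fQ x) * φstar0 := by
      filter_upwards [haeQ] with x hx hxS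
      have hrpos : 0 < fP x / fQ x := ENNReal.div_pos hxS.1.ne' hx.2.ne
      have hrtop : fP x / fQ x < ⊤ := ENNReal.div_lt_top hx.1.ne hxS.2.ne'
      have ht : 0 < (fP x / fQ x).toReal := ENNReal.toReal_pos hrpos.ne' hrtop.ne
      have key := phi_lt_line hconv hnonneg hone hstrict hc0 hc1 ht
      calc ENNReal.ofReal (φ ((fP x / fQ x).toReal))
          < ENNReal.ofReal (φ0.toReal + (fP x / fQ x).toReal * φstar0.toReal) := by
            rw [ENNReal.ofReal_lt_ofReal_iff
              (lt_of_le_of_lt (hnonneg _ ht) key)]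
            exact key
        _ = φ0 + (fP x / fQ x) * φstar0 := by
            rw [ENNReal.ofReal_add ENNReal.toReal_nonneg
                  (mul_nonneg ht.le ENNReal.toReal_nonneg),
                ENNReal.ofReal_mul ht.le, ENNReal.ofReal_toReal hφ0top,
                ENNReal.ofReal_toReal hφstop, ENNReal.ofReal_toReal hrtop.ne]
    -- upper function is measurable
    have hg : Measurable fun x => φ0 + (fP x / fQ x) * φstar0 :=
      measurable_const.add ((hfP.div hfQ).mul measurable_const)
    -- integral of the upper function
    have hratio : ∫⁻ x in {x | 0 < fP x ∧ 0 < fQ x}, fP x / fQ x ∂(lam.withDensity fQ)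
        = (lam.withDensity fP) {x | 0 < fP x ∧ 0 < fQ x} := by
      rw [restrict_withDensity hSm,
        lintegral_withDensity_eq_lintegral_mul _ hfQ (show Measurable (fun x => fP x / fQ x) from hfP.div hfQ)]
      have hcongr : ∫⁻ x, (fQ * fun x => fP x / fQ x) x
            ∂(lam.restrict {x | 0 < fP x ∧ 0 < fQ x})
          = ∫⁻ x in {x | 0 < fP x ∧ 0 < fQ x}, fP x ∂lam := by
        refine lintegral_congr_ae ?_
        filter_upwards [ae_restrict_mem (μ := lam) hSm, ae_restrict_of_ae hfQfin]
          with x hxS hxfin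
        simp only [Pi.mul_apply]
        exact ENNReal.mul_div_cancel hxS.2.ne' hxfin.ne
      rw [hcongr, ← withDensity_apply _ hSm]
    have hH : ∫⁻ x in {x | 0 < fP x ∧ 0 < fQ x},
          (φ0 + (fP x / fQ x) * φstar0) ∂(lam.withDensity fQ)
        = φ0 * (lam.withDensity fQ) {x | 0 < fP x ∧ 0 < fQ x}
          + (lam.withDensity fP) {x | 0 < fP x ∧ 0 < fQ x} * φstar0 := by
      rw [lintegral_add_left measurable_const, setLIntegral_const,
        lintegral_mul_const _ (show Measurable (fun x => fP x / fQ x) from hfP.div hfQ), hratio]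
    -- the φ-integral is finite
    have hIle : (∫⁻ x in {x | 0 < fP x ∧ 0 < fQ x},
        ENNReal.ofReal (φ ((fP x / fQ x).toReal)) ∂(lam.withDensity fQ))
        ≤ φ0 + φstar0 := by
      rw [← heq, phiDiv]
      exact le_add_right le_self_add
    have hItop : (∫⁻ x in {x | 0 < fP x ∧ 0 < fQ x},
        ENNReal.ofReal (φ ((fP x / fQ x).toReal)) ∂(lam.withDensity fQ)) ≠ ⊤ :=
      (hIle.trans_lt hfin).ne
    have hIlt := setLIntegral_strict_mono hSm hQSne hg hItop haept
    rw [hH] at hIlt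
    -- assemble the contradiction
    have hQS1 : (lam.withDensity fQ) {x | 0 < fP x ∧ 0 < fQ x} ≤ 1 := prob_le_one
    have hPS1 : (lam.withDensity fP) {x | 0 < fP x ∧ 0 < fQ x} ≤ 1 := prob_le_one
    have hsub1 : (1 : ℝ≥0∞) - (lam.withDensity fQ) {x | 0 < fP x ∧ 0 < fQ x} ≠ ⊤ :=
      (tsub_le_self.trans_lt ENNReal.one_lt_top).ne
    have hsub2 : (1 : ℝ≥0∞) - (lam.withDensity fP) {x | 0 < fP x ∧ 0 < fQ x} ≠ ⊤ :=
      (tsub_le_self.trans_lt ENNReal.one_lt_top).ne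
    have hA : φ0 * ((1:ℝ≥0∞) - (lam.withDensity fQ) {x | 0 < fP x ∧ 0 < fQ x}) ≠ ⊤ :=
      ENNReal.mul_ne_top hφ0top hsub1
    have hB : φstar0 * ((1:ℝ≥0∞) - (lam.withDensity fP) {x | 0 < fP x ∧ 0 < fQ x}) ≠ ⊤ :=
      ENNReal.mul_ne_top hφstop hsub2
    have hq : (lam.withDensity fQ) {x | 0 < fP x ∧ 0 < fQ x}
        + (1 - (lam.withDensity fQ) {x | 0 < fP x ∧ 0 < fQ x}) = 1 := by
      rw [add_comm]; exact tsub_add_cancel_of_le hQS1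
    have hp : (lam.withDensity fP) {x | 0 < fP x ∧ 0 < fQ x}
        + (1 - (lam.withDensity fP) {x | 0 < fP x ∧ 0 < fQ x}) = 1 := by
      rw [add_comm]; exact tsub_add_cancel_of_le hPS1
    have hD : phiDiv φ φ0 φstar0 lam fP fQ < φ0 + φstar0 := by
      rw [phiDiv, h2, h3']
      calc (∫⁻ x in {x | 0 < fP x ∧ 0 < fQ x},
            ENNReal.ofReal (φ ((fP x / fQ x).toReal)) ∂(lam.withDensity fQ))
            + φ0 * (1 - (lam.withDensity fQ) {x | 0 < fP x ∧ 0 < fQ x})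
            + φstar0 * (1 - (lam.withDensity fP) {x | 0 < fP x ∧ 0 < fQ x})
          < (φ0 * (lam.withDensity fQ) {x | 0 < fP x ∧ 0 < fQ x}
              + (lam.withDensity fP) {x | 0 < fP x ∧ 0 < fQ x} * φstar0)
            + φ0 * (1 - (lam.withDensity fQ) {x | 0 < fP x ∧ 0 < fQ x})
            + φstar0 * (1 - (lam.withDensity fP) {x | 0 < fP x ∧ 0 < fQ x}) :=
          ENNReal.add_lt_add_right hB (ENNReal.add_lt_add_right hA hIlt)
        _ = φ0 * ((lam.withDensity fQ) {x | 0 < fP x ∧ 0 < fQ x}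
              + (1 - (lam.withDensity fQ) {x | 0 < fP x ∧ 0 < fQ x}))
            + φstar0 * ((lam.withDensity fP) {x | 0 < fP x ∧ 0 < fQ x}
              + (1 - (lam.withDensity fP) {x | 0 < fP x ∧ 0 < fQ x})) := by ring
        _ = φ0 + φstar0 := by rw [hq, hp, mul_one, mul_one]
    exact absurd heq hD.ne
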